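/- Let σ = ⟨∅,S,true,T⟩_n be a pre-normalized reachable state of the translated program T(P). If there is an ω_p transition σ → σ' firing an implied rule instance, then the pre-normalization of σ' has the form ⟨∅,S,true,T'⟩_{n'} with T' ⊋ T; in particular chrToLa(σ) = chrToLa(σ') and the CHR constraint store after pre-normalization is unchanged while the propagation history strictly grows. -/

import Mathlib

namespace LA2CHR

/-- Mode indicators: positively asserted (`p`), negatively asserted (`n`), or both (`b`). -/
inductive Mode : Type
  | p | n | b
deriving DecidableEq

/-- CHR constraints of the translated program `T(P)`: for each ground user-defined
LA atom `a`, `raw a` is the CHR constraint `a(X̄)`, `rawDel a` is `del(a(X̄))`, and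
`rep a m` is the representation constraint `a_r(X̄, m)` with mode indicator `m`. -/
inductive TC (α : Type) : Type
  | raw : α → TC α
  | rawDel : α → TC α
  | rep : α → Mode → TC α
deriving DecidableEq

/-- Ground Logical Algorithms assertions: positive (`pos a` is `a`) or
negative (`del a` is `del(a)`). -/
inductive LAAtom (α : Type) : Type
  | pos : α → LAAtom α
  | del : α → LAAtom α
deriving DecidableEq

/-- A ground instance of a Logical Algorithms rule, with the comparison antecedents
already evaluated away: a ground instance belongs to the program iff its comparisons
are true.  `posA` are the (distinct) positive user-defined ground antecedents, `negA`
the atoms of the negative (`del`) antecedents, `concl` the instantiated conclusion and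
`prio` the instantiated rule priority. -/
structure Inst (α : Type) where
  prio : ℕ
  posA : Finset α
  negA : Finset α
  concl : Finset (LAAtom α)

variable {α : Type}

/-- Applicability of a ground rule instance of `P` in an LA state
(the priority condition is not included). -/
def LAApplicable (P : Set (Inst α)) (σ : Set (LAAtom α)) (ι : Inst α) : Prop :=
  ι ∈ P ∧ (∀ a ∈ ι.posA, LAAtom.pos a ∈ σ ∧ LAAtom.del a ∉ σ) ∧
    (∀ a ∈ ι.negA, LAAtom.del a ∈ σ) ∧ ¬ ↑ι.concl ⊆ σ

/-- The `Apply` transition of Logical Algorithms: a highest-priority applicable ground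
rule instance whose conclusion is not yet contained in the state fires. -/
def LAStep (P : Set (Inst α)) (σ σ' : Set (LAAtom α)) : Prop :=
  ∃ ι, LAApplicable P σ ι ∧ σ' = σ ∪ ↑ι.concl ∧
    ∀ ι', LAApplicable P σ ι' → ι.prio ≤ ι'.prio

/-- Names of the rules of the translated CHR^rp program `T(P)`: the six
set/deletion-semantics rule schemas (for all user-defined predicates at once,
instantiated per ground atom), and one propagation rule per ground LA rule instance
(the ground collapse of the rules `r_ρ`). -/
inductive RuleTag (α : Type) : Type
  | keepPos | mergePos | newPos | keepNeg | mergeNeg | newNeg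
  | inst : Inst α → RuleTag α

/-- Rule priorities of `T(P)`: the update rules have priority 1, the rules creating a
fresh representation have priority 2, and the translation of an LA rule of priority
`p` has priority `p + 2`. -/
def RuleTag.prio : RuleTag α → ℕ
  | .keepPos => 1
  | .mergePos => 1
  | .keepNeg => 1
  | .mergeNeg => 1
  | .newPos => 2
  | .newNeg => 2
  | .inst ι => ι.prio + 2

/-- CHR^rp execution states `⟨G, S, true, T⟩_n`: goal, CHR constraint store of
identified constraints, propagation history (recording a rule together with the set of
identified constraints it fired on) and next free identifier.  As the translated
program has no built-in tell constraints, the built-in store is always `true` and is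
omitted. -/
structure CState (α : Type) where
  goal : Multiset (TC α)
  store : Set (TC α × ℕ)
  hist : Set (RuleTag α × Set (TC α × ℕ))
  next : ℕ

/-- Conclusion atoms as CHR constraints. -/
def toTC : LAAtom α → TC α
  | .pos a => .raw a
  | .del a => .rawDel a

/-- `Fires P χ t H R B`: rule `t` of `T(P)` has an instance in state `χ` matching the
set `H` of identified stored head constraints, of which the ones in `R` are removed,
with instantiated body `B`.  This comprises all conditions of the ω_p `Apply`
transition except the empty-goal, propagation-history and priority conditions. -/
inductive Fires (P : Set (Inst α)) (χ : CState α) :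
    RuleTag α → Set (TC α × ℕ) → Set (TC α × ℕ) → Multiset (TC α) → Prop
  | keepPos (a : α) (m : Mode) (i j : ℕ) : m ≠ Mode.n →
      (TC.rep a m, i) ∈ χ.store → (TC.raw a, j) ∈ χ.store →
      Fires P χ .keepPos {(TC.rep a m, i), (TC.raw a, j)} {(TC.raw a, j)} 0
  | mergePos (a : α) (i j : ℕ) :
      (TC.rep a Mode.n, i) ∈ χ.store → (TC.raw a, j) ∈ χ.store →
      Fires P χ .mergePos {(TC.rep a Mode.n, i), (TC.raw a, j)}
        {(TC.rep a Mode.n, i), (TC.raw a, j)} {TC.rep a Mode.b}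
  | newPos (a : α) (j : ℕ) : (TC.raw a, j) ∈ χ.store →
      Fires P χ .newPos {(TC.raw a, j)} {(TC.raw a, j)} {TC.rep a Mode.p}
  | keepNeg (a : α) (m : Mode) (i j : ℕ) : m ≠ Mode.p →
      (TC.rep a m, i) ∈ χ.store → (TC.rawDel a, j) ∈ χ.store →
      Fires P χ .keepNeg {(TC.rep a m, i), (TC.rawDel a, j)} {(TC.rawDel a, j)} 0
  | mergeNeg (a : α) (i j : ℕ) :
      (TC.rep a Mode.p, i) ∈ χ.store → (TC.rawDel a, j) ∈ χ.store →
      Fires P χ .mergeNeg {(TC.rep a Mode.p, i), (TC.rawDel a, j)}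
        {(TC.rep a Mode.p, i), (TC.rawDel a, j)} {TC.rep a Mode.b}
  | newNeg (a : α) (j : ℕ) : (TC.rawDel a, j) ∈ χ.store →
      Fires P χ .newNeg {(TC.rawDel a, j)} {(TC.rawDel a, j)} {TC.rep a Mode.n}
  | inst (ι : Inst α) (fp fn : α → ℕ) (fm : α → Mode) : ι ∈ P →
      (∀ a ∈ ι.posA, (TC.rep a Mode.p, fp a) ∈ χ.store) →
      (∀ a ∈ ι.negA, fm a ≠ Mode.p ∧ (TC.rep a (fm a), fn a) ∈ χ.store) →
      Fires P χ (.inst ι)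
        ((fun a => (TC.rep a Mode.p, fp a)) '' ↑ι.posA ∪
          (fun a => (TC.rep a (fm a), fn a)) '' ↑ι.negA)
        ∅ (Multiset.map toTC ι.concl.val)

/-- Transition labels: `Introduce`, or `Apply` of a given rule of `T(P)`. -/
inductive Lab (α : Type) : Type
  | intro : Lab α
  | apply : RuleTag α → Lab α

variable [DecidableEq α]

/-- The transitions of the priority semantics ω_p for the translated program `T(P)`:
`Introduce` moves a constraint from the goal to the store with a fresh identifier;
`Apply` (possible only when the goal is empty) fires an instance of a rule whose
history tuple is not yet recorded and such that no fireable rule instance has a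
strictly higher priority. -/
inductive Step (P : Set (Inst α)) : CState α → Lab α → CState α → Prop
  | intro (χ : CState α) (c : TC α) : c ∈ χ.goal →
      Step P χ .intro ⟨χ.goal.erase c, insert (c, χ.next) χ.store, χ.hist, χ.next + 1⟩
  | apply (χ : CState α) (t : RuleTag α) (H R : Set (TC α × ℕ)) (B : Multiset (TC α)) :
      χ.goal = 0 → Fires P χ t H R B → (t, H) ∉ χ.hist →
      (∀ t' H' R' B', Fires P χ t' H' R' B' → (t', H') ∉ χ.hist →
        RuleTag.prio t ≤ RuleTag.prio t') →
      Step P χ (.apply t) ⟨B, χ.store \ R, insert (t, H) χ.hist, χ.next⟩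

/-- Some ω_p transition. -/
def StepAny (P : Set (Inst α)) (χ χ' : CState α) : Prop := ∃ l, Step P χ l χ'

/-- An ω_p transition that is an `Introduce` or fires a rule of priority 1 or 2. -/
def Step2 (P : Set (Inst α)) (χ χ' : CState α) : Prop :=
  ∃ l, Step P χ l χ' ∧ ∀ t, l = Lab.apply t → RuleTag.prio t ≤ 2

/-- Membership in `A = G ∪ chr(S)`. -/
def memA (χ : CState α) (c : TC α) : Prop := c ∈ χ.goal ∨ ∃ i, (c, i) ∈ χ.store

/-- The mapping from (reachable) CHR^rp execution states of `T(P)` to LA states. -/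
def chrToLa (χ : CState α) : Set (LAAtom α) :=
  {x | (∃ a, x = LAAtom.pos a ∧
          (memA χ (TC.raw a) ∨ ∃ m, m ≠ Mode.n ∧ memA χ (TC.rep a m))) ∨
       (∃ a, x = LAAtom.del a ∧
          (memA χ (TC.rawDel a) ∨ ∃ m, m ≠ Mode.p ∧ memA χ (TC.rep a m)))}

/-- Initial states `⟨G, ∅, true, ∅⟩_n` where the goal `G` contains only constraints of
the forms `a(X̄)` and `del(a(X̄))` (no `a_r` constraints). -/
def Init (χ : CState α) : Prop :=
  (∀ c ∈ χ.goal, ∃ a, c = TC.raw a ∨ c = TC.rawDel a) ∧ χ.store = ∅ ∧ χ.hist = ∅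

/-- Reachability (w.r.t. ω_p and program `T(P)`) from an initial state. -/
def Reachable (P : Set (Inst α)) (χ : CState α) : Prop :=
  ∃ χ₀, Init χ₀ ∧ Relation.ReflTransGen (StepAny P) χ₀ χ

/-- Pre-normal form: empty goal, the store contains only `a_r(X̄, M)` constraints, and
two stored representations of the same atom have the same identifier. -/
def PreNormal (χ : CState α) : Prop :=
  χ.goal = 0 ∧ (∀ c ∈ χ.store, ∃ a m, c.1 = TC.rep a m) ∧
  ∀ a m₁ m₂ i₁ i₂, (TC.rep a m₁, i₁) ∈ χ.store → (TC.rep a m₂, i₂) ∈ χ.store → i₁ = i₂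

/-- A rule instance is implied in a state `σ` if its conclusion is contained in
`chrToLa σ`. -/
def Implied (ι : Inst α) (χ : CState α) : Prop := ↑ι.concl ⊆ chrToLa χ

set_option linter.unusedSectionVars false

lemma prio_pos (t : RuleTag α) : 1 ≤ RuleTag.prio t := by
  cases t <;> simp [RuleTag.prio]

lemma Fires.head_sub {P : Set (Inst α)} {χ : CState α} {t H R B}
    (h : Fires P χ t H R B) : ∀ x ∈ H, x ∈ χ.store := by
  cases h with
  | keepPos a m i j h1 h2 h3 => intro x hx; rcases hx with hx | hx <;> subst hx <;> assumption
  | mergePos a i j h2 h3 => intro x hx; rcases hx with hx | hx <;> subst hx <;> assumption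
  | newPos a j h2 => intro x hx; rcases hx with hx; subst hx; assumption
  | keepNeg a m i j h1 h2 h3 => intro x hx; rcases hx with hx | hx <;> subst hx <;> assumption
  | mergeNeg a i j h2 h3 => intro x hx; rcases hx with hx | hx <;> subst hx <;> assumption
  | newNeg a j h2 => intro x hx; rcases hx with hx; subst hx; assumption
  | inst ι fp fn fm h1 h2 h3 =>
      rintro x (⟨a, ha, rfl⟩ | ⟨a, ha, rfl⟩)
      · exact h2 a ha
      · exact (h3 a ha).2

def IdsBelow (χ : CState α) : Prop :=
  (∀ c i, (c, i) ∈ χ.store → i < χ.next) ∧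
  (∀ t H, (t, H) ∈ χ.hist → ∀ c i, (c, i) ∈ H → i < χ.next)

lemma IdsBelow.step {P : Set (Inst α)} {χ χ' : CState α} {l}
    (h : IdsBelow χ) (hs : Step P χ l χ') : IdsBelow χ' := by
  cases hs with
  | intro c hc =>
      constructor
      · rintro c' i (hi | hi)
        · cases hi; exact Nat.lt_succ_self _
        · exact Nat.lt_succ_of_lt (h.1 c' i hi)
      · intro t H hH c' i hi
        exact Nat.lt_succ_of_lt (h.2 t H hH c' i hi)
  | apply t H R B hg hf hn hp =>
      constructor
      · intro c i hi; exact h.1 c i hi.1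
      · rintro t' H' (hH | hH) c' i hi
        · cases hH; exact h.1 c' i (hf.head_sub _ hi)
        · exact h.2 t' H' hH c' i hi

lemma reachable_idsBelow {P : Set (Inst α)} {χ : CState α}
    (h : Reachable P χ) : IdsBelow χ := by
  obtain ⟨χ₀, ⟨_, hs, hh⟩, hrt⟩ := h
  induction hrt with
  | refl => exact ⟨by simp [hs], by simp [hh]⟩
  | tail _ hstep ih => obtain ⟨l, hl⟩ := hstep; exact ih.step hl
lemma intro_all (P : Set (Inst α)) :
    ∀ (n : ℕ) (ψ : CState α), Multiset.card ψ.goal = n →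
    ∃ l : List (TC α × ℕ),
      (↑(l.map Prod.fst) : Multiset (TC α)) = ψ.goal ∧
      (∀ x ∈ l, ψ.next ≤ x.2) ∧
      (l.map Prod.snd).Nodup ∧
      Relation.ReflTransGen (Step2 P) ψ
        ⟨0, ψ.store ∪ {x | x ∈ l}, ψ.hist, ψ.next + n⟩ := by
  intro n
  induction n with
  | zero =>
      intro ψ hg
      rw [Multiset.card_eq_zero] at hg
      refine ⟨[], by simp [hg], by simp, by simp, ?_⟩
      have he : (⟨0, ψ.store ∪ {x | x ∈ ([] : List (TC α × ℕ))}, ψ.hist, ψ.next + 0⟩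
          : CState α) = ψ := by
        obtain ⟨g, s, h, m⟩ := ψ
        simp only at hg
        simp [hg]
      rw [he]
  | succ n ih =>
      intro ψ hg
      obtain ⟨c, hc⟩ : ∃ c, c ∈ ψ.goal := by
        apply Multiset.exists_mem_of_ne_zero
        intro h; rw [h] at hg; simp at hg
      have hcard : Multiset.card ((⟨ψ.goal.erase c, insert (c, ψ.next) ψ.store, ψ.hist,
          ψ.next + 1⟩ : CState α).goal) = n := by
        simp [Multiset.card_erase_of_mem hc, hg]
      obtain ⟨l', h1, h2, h3, h4⟩ := ih _ hcard
      dsimp only at h1 h2 h3 h4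
      refine ⟨(c, ψ.next) :: l', ?_, ?_, ?_, ?_⟩
      · simp only [List.map_cons]
        rw [← Multiset.cons_coe, h1]; exact Multiset.cons_erase hc
      · intro x hx
        rcases List.mem_cons.mp hx with rfl | hx
        · exact le_refl _
        · exact le_trans (Nat.le_succ _) (h2 x hx)
      · simp only [List.map_cons, List.nodup_cons]
        refine ⟨?_, h3⟩
        intro hmem
        obtain ⟨x, hx, hx2⟩ := List.mem_map.mp hmem
        have := h2 x hx
        omega
      · have hstep : Step2 P ψ ⟨ψ.goal.erase c, insert (c, ψ.next) ψ.store, ψ.hist,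
            ψ.next + 1⟩ := ⟨.intro, Step.intro ψ c hc, fun t h => nomatch h⟩
        have hst : insert (c, ψ.next) ψ.store ∪ {x | x ∈ l'} =
            ψ.store ∪ {x | x ∈ (c, ψ.next) :: l'} := by
          ext x
          simp only [Set.mem_union, Set.mem_insert_iff, Set.mem_setOf_eq, List.mem_cons]
          tauto
        have hnx : ψ.next + 1 + n = ψ.next + (n + 1) := by omega
        rw [hst, hnx] at h4
        exact Relation.ReflTransGen.head hstep h4
lemma absorb_all (P : Set (Inst α)) (S₀ : Set (TC α × ℕ)) (N₀ : ℕ)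
    (hS₀ : ∀ c ∈ S₀, ∃ a m, c.1 = TC.rep a m)
    (hSid : ∀ c i, (c, i) ∈ S₀ → i < N₀) :
    ∀ (l : List (TC α × ℕ)) (Hst : Set (RuleTag α × Set (TC α × ℕ))) (N : ℕ),
    (∀ x ∈ l,
      ((∃ a, x.1 = TC.raw a ∧ ∃ m i, m ≠ Mode.n ∧ (TC.rep a m, i) ∈ S₀) ∨
       (∃ a, x.1 = TC.rawDel a ∧ ∃ m i, m ≠ Mode.p ∧ (TC.rep a m, i) ∈ S₀)) ∧ N₀ ≤ x.2) →
    (l.map Prod.snd).Nodup →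
    (∀ p ∈ Hst, ∀ c i, (c, i) ∈ p.2 → i ∉ l.map Prod.snd) →
    ∃ Hst', Hst ⊆ Hst' ∧
      Relation.ReflTransGen (Step2 P) ⟨0, S₀ ∪ {x | x ∈ l}, Hst, N⟩ ⟨0, S₀, Hst', N⟩ := by
  intro l
  induction l with
  | nil =>
      intro Hst N _ _ _
      have he : S₀ ∪ {x | x ∈ ([] : List (TC α × ℕ))} = S₀ := by simp
      exact ⟨Hst, subset_rfl, by rw [he]⟩
  | cons x l' ih =>
      intro Hst N habs hnd hhist
      obtain ⟨c, j⟩ := x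
      have hj : N₀ ≤ j := (habs _ (List.mem_cons_self)).2
      have hjl' : j ∉ l'.map Prod.snd := by
        have := List.nodup_cons.mp hnd; simpa using this.1
      have hl'id : ∀ x ∈ l', N₀ ≤ x.2 := fun x hx => (habs x (List.mem_cons_of_mem _ hx)).2
      -- common pieces, parametrized by the head constraint and history entry
      rcases (habs _ (List.mem_cons_self)).1 with ⟨a, hc, m, i, hm, hrep⟩ |
        ⟨a, hc, m, i, hm, hrep⟩ <;> simp only at hc <;> subst hc
      case _ =>
        set Hd : Set (TC α × ℕ) := {(TC.rep a m, i), (TC.raw a, j)} with hHd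
        have hfires : Fires P ⟨0, S₀ ∪ {y | y ∈ (TC.raw a, j) :: l'}, Hst, N⟩
            .keepPos Hd {(TC.raw a, j)} 0 :=
          Fires.keepPos a m i j hm (Or.inl hrep) (Or.inr (List.mem_cons_self))
        have hnotin : (RuleTag.keepPos, Hd) ∉ Hst := by
          intro h
          exact hhist _ h (TC.raw a) j (Or.inr rfl) (by simp)
        have hstep : Step2 P ⟨0, S₀ ∪ {y | y ∈ (TC.raw a, j) :: l'}, Hst, N⟩
            ⟨0, (S₀ ∪ {y | y ∈ (TC.raw a, j) :: l'}) \ {(TC.raw a, j)},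
              insert (RuleTag.keepPos, Hd) Hst, N⟩ := by
          refine ⟨.apply .keepPos, Step.apply _ _ _ _ _ rfl hfires hnotin ?_, ?_⟩
          · intro t' _ _ _ _ _; exact prio_pos t'
          · intro t ht; cases ht; simp [RuleTag.prio]
        have hst : (S₀ ∪ {y | y ∈ (TC.raw a, j) :: l'}) \ {(TC.raw a, j)} =
            S₀ ∪ {y | y ∈ l'} := by
          ext y
          simp only [Set.mem_diff, Set.mem_union, Set.mem_setOf_eq, List.mem_cons,
            Set.mem_singleton_iff]
          constructor
          · rintro ⟨h1 | h1 | h1, h2⟩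
            · exact Or.inl h1
            · exact absurd h1 h2
            · exact Or.inr h1
          · rintro (h1 | h1)
            · refine ⟨Or.inl h1, ?_⟩
              rintro rfl
              obtain ⟨_, _, h⟩ := hS₀ _ h1
              exact absurd h (by simp)
            · refine ⟨Or.inr (Or.inr h1), ?_⟩
              rintro rfl
              exact hjl' (List.mem_map.mpr ⟨_, h1, rfl⟩)
        rw [hst] at hstep
        have hhist' : ∀ p ∈ insert (RuleTag.keepPos, Hd) Hst,
            ∀ c i', (c, i') ∈ p.2 → i' ∉ l'.map Prod.snd := by
          rintro p (rfl | hp) c i' hci hmem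
          · obtain ⟨y, hy, rfl⟩ := List.mem_map.mp hmem
            simp only [hHd, Set.mem_insert_iff, Set.mem_singleton_iff,
              Prod.mk.injEq] at hci
            rcases hci with ⟨-, h2⟩ | ⟨-, h2⟩
            · have := hSid _ _ hrep
              have := hl'id y hy
              omega
            · exact hjl' (h2 ▸ List.mem_map.mpr ⟨y, hy, rfl⟩)
          · exact hhist p hp c i' hci (by simp [hmem])
        obtain ⟨Hst', hsub, hrt⟩ := ih (insert (RuleTag.keepPos, Hd) Hst) N
          (fun x hx => habs x (List.mem_cons_of_mem _ hx)) (List.nodup_cons.mp hnd).2 hhist'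
        exact ⟨Hst', subset_trans (Set.subset_insert _ _) hsub,
          Relation.ReflTransGen.head hstep hrt⟩
      case _ =>
        set Hd : Set (TC α × ℕ) := {(TC.rep a m, i), (TC.rawDel a, j)} with hHd
        have hfires : Fires P ⟨0, S₀ ∪ {y | y ∈ (TC.rawDel a, j) :: l'}, Hst, N⟩
            .keepNeg Hd {(TC.rawDel a, j)} 0 :=
          Fires.keepNeg a m i j hm (Or.inl hrep) (Or.inr (List.mem_cons_self))
        have hnotin : (RuleTag.keepNeg, Hd) ∉ Hst := by
          intro h
          exact hhist _ h (TC.rawDel a) j (Or.inr rfl) (by simp)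
        have hstep : Step2 P ⟨0, S₀ ∪ {y | y ∈ (TC.rawDel a, j) :: l'}, Hst, N⟩
            ⟨0, (S₀ ∪ {y | y ∈ (TC.rawDel a, j) :: l'}) \ {(TC.rawDel a, j)},
              insert (RuleTag.keepNeg, Hd) Hst, N⟩ := by
          refine ⟨.apply .keepNeg, Step.apply _ _ _ _ _ rfl hfires hnotin ?_, ?_⟩
          · intro t' _ _ _ _ _; exact prio_pos t'
          · intro t ht; cases ht; simp [RuleTag.prio]
        have hst : (S₀ ∪ {y | y ∈ (TC.rawDel a, j) :: l'}) \ {(TC.rawDel a, j)} =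
            S₀ ∪ {y | y ∈ l'} := by
          ext y
          simp only [Set.mem_diff, Set.mem_union, Set.mem_setOf_eq, List.mem_cons,
            Set.mem_singleton_iff]
          constructor
          · rintro ⟨h1 | h1 | h1, h2⟩
            · exact Or.inl h1
            · exact absurd h1 h2
            · exact Or.inr h1
          · rintro (h1 | h1)
            · refine ⟨Or.inl h1, ?_⟩
              rintro rfl
              obtain ⟨_, _, h⟩ := hS₀ _ h1
              exact absurd h (by simp)
            · refine ⟨Or.inr (Or.inr h1), ?_⟩
              rintro rfl
              exact hjl' (List.mem_map.mpr ⟨_, h1, rfl⟩)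
        rw [hst] at hstep
        have hhist' : ∀ p ∈ insert (RuleTag.keepNeg, Hd) Hst,
            ∀ c i', (c, i') ∈ p.2 → i' ∉ l'.map Prod.snd := by
          rintro p (rfl | hp) c i' hci hmem
          · obtain ⟨y, hy, rfl⟩ := List.mem_map.mp hmem
            simp only [hHd, Set.mem_insert_iff, Set.mem_singleton_iff,
              Prod.mk.injEq] at hci
            rcases hci with ⟨-, h2⟩ | ⟨-, h2⟩
            · have := hSid _ _ hrep
              have := hl'id y hy
              omega
            · exact hjl' (h2 ▸ List.mem_map.mpr ⟨y, hy, rfl⟩)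
          · exact hhist p hp c i' hci (by simp [hmem])
        obtain ⟨Hst', hsub, hrt⟩ := ih (insert (RuleTag.keepNeg, Hd) Hst) N
          (fun x hx => habs x (List.mem_cons_of_mem _ hx)) (List.nodup_cons.mp hnd).2 hhist'
        exact ⟨Hst', subset_trans (Set.subset_insert _ _) hsub,
          Relation.ReflTransGen.head hstep hrt⟩
lemma chrToLa_congr {χ₁ χ₂ : CState α} (h : ∀ c, memA χ₁ c ↔ memA χ₂ c) :
    chrToLa χ₁ = chrToLa χ₂ := by
  ext x
  simp only [chrToLa, Set.mem_setOf_eq, h]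

lemma memA_iff_store {χ : CState α} (hg : χ.goal = 0) (c : TC α) :
    memA χ c ↔ ∃ i, (c, i) ∈ χ.store := by
  unfold memA; rw [hg]; simp

end LA2CHR

open LA2CHR in
/-- Let `σ = ⟨∅, S, true, T⟩_n` be a pre-normalized reachable state of the translated
program `T(P)`.  If an ω_p transition `σ → σ'` fires an implied rule instance, then
`chrToLa σ = chrToLa σ'` and the pre-normalization of `σ'` has the form
`⟨∅, S, true, T'⟩_{n'}` with `T' ⊋ T`: the CHR constraint store after
pre-normalization is unchanged while the propagation history strictly grows. -/
theorem implied_rule_instances_are_no_ops {α : Type} [DecidableEq α]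
    (P : Set (Inst α)) (χ χ' : CState α) (ι : Inst α)
    (hreach : Reachable P χ) (hpre : PreNormal χ)
    (hstep : Step P χ (Lab.apply (RuleTag.inst ι)) χ')
    (himp : Implied ι χ) :
    chrToLa χ' = chrToLa χ ∧
    ∃ χs, Relation.ReflTransGen (Step2 P) χ' χs ∧ PreNormal χs ∧
      χs.store = χ.store ∧ χ.hist ⊂ χs.hist ∧ chrToLa χs = chrToLa χ := by
  obtain ⟨hg0, hS0, hid⟩ := hpre
  obtain ⟨hidS, hidH⟩ := reachable_idsBelow hreach
  have hkey : ∀ x ∈ ι.concl,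
      (∃ a, x = LAAtom.pos a ∧ ∃ m i, m ≠ Mode.n ∧ (TC.rep a m, i) ∈ χ.store) ∨
      (∃ a, x = LAAtom.del a ∧ ∃ m i, m ≠ Mode.p ∧ (TC.rep a m, i) ∈ χ.store) := by
    intro x hx
    have hx' := himp (Finset.mem_coe.mpr hx)
    rcases hx' with ⟨a, rfl, hmm⟩ | ⟨a, rfl, hmm⟩
    · left; refine ⟨a, rfl, ?_⟩
      rcases hmm with hr | ⟨m, hm, hr⟩
      · obtain ⟨i, hi⟩ := (memA_iff_store hg0 _).mp hr
        obtain ⟨a', m', he⟩ := hS0 _ hi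
        exact absurd he (by simp)
      · obtain ⟨i, hi⟩ := (memA_iff_store hg0 _).mp hr
        exact ⟨m, i, hm, hi⟩
    · right; refine ⟨a, rfl, ?_⟩
      rcases hmm with hr | ⟨m, hm, hr⟩
      · obtain ⟨i, hi⟩ := (memA_iff_store hg0 _).mp hr
        obtain ⟨a', m', he⟩ := hS0 _ hi
        exact absurd he (by simp)
      · obtain ⟨i, hi⟩ := (memA_iff_store hg0 _).mp hr
        exact ⟨m, i, hm, hi⟩
  cases hstep with
  | apply t H R B hgoal hf hn hprio =>
    cases hf with
    | inst ι2 fp fn fm hP hpos hneg =>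
      set B : Multiset (TC α) := Multiset.map toTC ι.concl.val with hB
      set Hd : Set (TC α × ℕ) :=
        ((fun a => (TC.rep a Mode.p, fp a)) '' ↑ι.posA ∪
          (fun a => (TC.rep a (fm a), fn a)) '' ↑ι.negA) with hHd
      have hBmem : ∀ c : TC α, c ∈ B → ∃ x ∈ ι.concl, toTC x = c := by
        intro c hc
        obtain ⟨x, hx, rfl⟩ := Multiset.mem_map.mp hc
        exact ⟨x, hx, rfl⟩
      have hdiff : χ.store \ (∅ : Set (TC α × ℕ)) = χ.store := Set.diff_empty
      constructor
      · -- chrToLa χ' = chrToLa χ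
        ext x
        simp only [chrToLa, Set.mem_setOf_eq]
        have hmemA' : ∀ c : TC α,
            memA ⟨B, χ.store \ ∅, insert (RuleTag.inst ι, Hd) χ.hist, χ.next⟩ c ↔
              (c ∈ B ∨ ∃ i, (c, i) ∈ χ.store) := by
          intro c; unfold memA; rw [hdiff]
        have hmemA : ∀ c : TC α, memA χ c ↔ ∃ i, (c, i) ∈ χ.store :=
          memA_iff_store hg0
        constructor
        · rintro (⟨a, rfl, hmm⟩ | ⟨a, rfl, hmm⟩)
          · rcases hmm with hr | ⟨m, hm, hr⟩
            · rcases (hmemA' _).mp hr with hg | hs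
              · obtain ⟨y, hy, hty⟩ := hBmem _ hg
                have : y = LAAtom.pos a := by cases y <;> simp [toTC] at hty <;> simp [hty]
                subst this
                exact himp (Finset.mem_coe.mpr hy)
              · exact Or.inl ⟨a, rfl, Or.inl ((hmemA _).mpr hs)⟩
            · rcases (hmemA' _).mp hr with hg | hs
              · obtain ⟨y, hy, hty⟩ := hBmem _ hg
                cases y <;> simp [toTC] at hty
              · exact Or.inl ⟨a, rfl, Or.inr ⟨m, hm, (hmemA _).mpr hs⟩⟩
          · rcases hmm with hr | ⟨m, hm, hr⟩
            · rcases (hmemA' _).mp hr with hg | hs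
              · obtain ⟨y, hy, hty⟩ := hBmem _ hg
                have : y = LAAtom.del a := by cases y <;> simp [toTC] at hty <;> simp [hty]
                subst this
                exact himp (Finset.mem_coe.mpr hy)
              · exact Or.inr ⟨a, rfl, Or.inl ((hmemA _).mpr hs)⟩
            · rcases (hmemA' _).mp hr with hg | hs
              · obtain ⟨y, hy, hty⟩ := hBmem _ hg
                cases y <;> simp [toTC] at hty
              · exact Or.inr ⟨a, rfl, Or.inr ⟨m, hm, (hmemA _).mpr hs⟩⟩
        · rintro (⟨a, rfl, hmm⟩ | ⟨a, rfl, hmm⟩)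
          · refine Or.inl ⟨a, rfl, ?_⟩
            rcases hmm with hr | ⟨m, hm, hr⟩
            · exact Or.inl ((hmemA' _).mpr (Or.inr ((hmemA _).mp hr)))
            · exact Or.inr ⟨m, hm, (hmemA' _).mpr (Or.inr ((hmemA _).mp hr))⟩
          · refine Or.inr ⟨a, rfl, ?_⟩
            rcases hmm with hr | ⟨m, hm, hr⟩
            · exact Or.inl ((hmemA' _).mpr (Or.inr ((hmemA _).mp hr)))
            · exact Or.inr ⟨m, hm, (hmemA' _).mpr (Or.inr ((hmemA _).mp hr))⟩
      · -- pre-normalization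
        simp only [Set.diff_empty]
        obtain ⟨l, hl1, hl2, hl3, hl4⟩ := intro_all P (Multiset.card B)
          ⟨B, χ.store \ ∅, insert (RuleTag.inst ι, Hd) χ.hist, χ.next⟩ rfl
        simp only [hdiff] at hl1 hl2 hl3 hl4
        have hHdsub : ∀ c i, (c, i) ∈ Hd → (c, i) ∈ χ.store := by
          rintro c i (⟨a, ha, he⟩ | ⟨a, ha, he⟩)
          · rw [← he]; exact hpos a ha
          · rw [← he]; exact (hneg a ha).2
        have habs : ∀ x ∈ l,
            ((∃ a, x.1 = TC.raw a ∧ ∃ m i, m ≠ Mode.n ∧ (TC.rep a m, i) ∈ χ.store) ∨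
             (∃ a, x.1 = TC.rawDel a ∧ ∃ m i, m ≠ Mode.p ∧ (TC.rep a m, i) ∈ χ.store)) ∧
            χ.next ≤ x.2 := by
          intro x hx
          refine ⟨?_, hl2 x hx⟩
          have hx1 : x.1 ∈ B := by
            rw [← hl1]
            exact Multiset.mem_coe.mpr (List.mem_map.mpr ⟨x, hx, rfl⟩)
          obtain ⟨y, hy, hty⟩ := hBmem _ hx1
          rcases hkey y hy with ⟨a, rfl, m, i, hm, hrep⟩ | ⟨a, rfl, m, i, hm, hrep⟩
          · exact Or.inl ⟨a, by rw [← hty]; rfl, m, i, hm, hrep⟩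
          · exact Or.inr ⟨a, by rw [← hty]; rfl, m, i, hm, hrep⟩
        have hhist : ∀ p ∈ insert (RuleTag.inst ι, Hd) χ.hist,
            ∀ c i, (c, i) ∈ p.2 → i ∉ l.map Prod.snd := by
          rintro p (rfl | hp) c i hci hmem
          · obtain ⟨y, hy, rfl⟩ := List.mem_map.mp hmem
            have h1 := hidS _ _ (hHdsub _ _ hci)
            have h2 := hl2 y hy
            omega
          · obtain ⟨y, hy, rfl⟩ := List.mem_map.mp hmem
            have h1 := hidH _ _ hp c _ hci
            have h2 := hl2 y hy
            omega
        obtain ⟨Hst', hsub, hrt2⟩ := absorb_all P χ.store χ.next hS0 hidS l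
          (insert (RuleTag.inst ι, Hd) χ.hist) (χ.next + Multiset.card B)
          habs hl3 hhist
        refine ⟨⟨0, χ.store, Hst', χ.next + Multiset.card B⟩,
          Relation.ReflTransGen.trans hl4 hrt2, ⟨rfl, hS0, hid⟩, rfl, ?_, ?_⟩
        · have hsubset : χ.hist ⊆ Hst' := fun y hy => hsub (Set.mem_insert_of_mem _ hy)
          rw [Set.ssubset_iff_of_subset hsubset]
          exact ⟨(RuleTag.inst ι, Hd), hsub (Set.mem_insert _ _), hn⟩
        · apply chrToLa_congr
          intro c
          rw [memA_iff_store rfl, memA_iff_store hg0]
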